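/- Let z ≥ 2 and let f_i, f_j, f_k ∈ ℝ^z be probability vectors. Let R be the quadratic scoring rule R(f, e) = 2·f_e − Σ_{x=1}^{z} f_x², and let D(f, g) = sqrt( (Σ_{x=1}^{z} (f_x − g_x)²) / z ). Then D(f_i, f_j) < D(f_i, f_k) if and only if E_{f_i}[R(f_j)] > E_{f_i}[R(f_k)], where E_f[R(g)] = Σ_{e=1}^{z} f_e · R(g, e). That is, the quadratic scoring rule is effective with respect to the root-mean-square deviation D. -/
import Mathlib


open Finset

/-- A probability vector: nonnegative entries summing to 1. -/
def ProbVec {z : ℕ} (f : Fin z → ℝ) : Prop :=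
  (∀ k, 0 ≤ f k) ∧ ∑ k, f k = 1

/-- The quadratic scoring rule: `R(f, e) = 2 f_e − Σ_k f_k²`. -/
noncomputable def QSR {z : ℕ} (f : Fin z → ℝ) (e : Fin z) : ℝ :=
  2 * f e - ∑ k, f k ^ 2

/-- The `f`-expected score of reporting `g` under the quadratic scoring rule. -/
noncomputable def expScore {z : ℕ} (f g : Fin z → ℝ) : ℝ :=
  ∑ e, f e * QSR g e

/-- Root-mean-square deviation between two opinions. -/
noncomputable def D {z : ℕ} (f g : Fin z → ℝ) : ℝ :=
  Real.sqrt ((∑ k, (f k - g k) ^ 2) / z)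

lemma expScore_eq {z : ℕ} (f g : Fin z → ℝ) (hf : ∑ k, f k = 1) :
    expScore f g = ∑ k, f k ^ 2 - ∑ k, (f k - g k) ^ 2 := by
  unfold expScore QSR
  have e1 : ∑ e, f e * (2 * g e - ∑ k, g k ^ 2)
      = ∑ e, (2 * (f e * g e) - f e * ∑ k, g k ^ 2) :=
    Finset.sum_congr rfl fun e _ => by ring
  have e2 : ∑ k, (f k - g k) ^ 2
      = ∑ k, (f k ^ 2 - 2 * (f k * g k) + g k ^ 2) :=
    Finset.sum_congr rfl fun k _ => by ring
  rw [e1, e2, Finset.sum_sub_distrib, Finset.sum_add_distrib, Finset.sum_sub_distrib,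
    ← Finset.mul_sum, ← Finset.sum_mul, hf, one_mul]
  ring

/-- The quadratic scoring rule is effective with respect to the
root-mean-square deviation `D`. -/
theorem quadratic_effective_wrt_rmsd {z : ℕ} (hz : 2 ≤ z)
    (fi fj fk : Fin z → ℝ) (hfi : ProbVec fi) (hfj : ProbVec fj) (hfk : ProbVec fk) :
    D fi fj < D fi fk ↔ expScore fi fj > expScore fi fk := by
  have hzpos : (0 : ℝ) < z := by positivity
  have hj : (0 : ℝ) ≤ (∑ k, (fi k - fj k) ^ 2) / z := by positivity
  have hk : (0 : ℝ) ≤ (∑ k, (fi k - fk k) ^ 2) / z := by positivity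
  unfold D
  rw [Real.sqrt_lt_sqrt_iff hj, div_lt_div_iff_of_pos_right hzpos,
    expScore_eq fi fj hfi.2, expScore_eq fi fk hfi.2]
  constructor <;> intro h <;> linarith
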